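/- Let k be a field, S a finite-dimensional split k-algebra which is constrained, and R a factor algebra of S which is a symmetric algebra. Then R is semisimple. In particular, a constrained finite-dimensional split symmetric k-algebra is semisimple. -/
import Mathlib


open TensorProduct

namespace Paper

variable (k S : Type*) [Field k] [Ring S] [Algebra k S]

/-- The `k`-linear span of all commutators `x*y - y*x` in `S`; denoted `[S,S]` in the paper. -/
def commutatorSpan : Submodule k S :=
  Submodule.span k {x : S | ∃ a b : S, x = a * b - b * a}

/-- `S` is (radically) constrained if its Jacobson radical is contained in `[S,S]`. -/
def IsConstrained : Prop :=
  ((⊥ : Ideal S).jacobson : Set S) ⊆ (commutatorSpan k S : Set S)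

/-- `S` is split if every endomorphism of a simple left `S`-module is a scalar. -/
def IsSplitAlgebra : Prop :=
  ∀ (L : Type) [AddCommGroup L] [Module S L], IsSimpleModule S L →
    ∀ f : L →ₗ[S] L, ∃ c : k, ∀ x : L, f x = algebraMap k S c • x

/-- A bundled finite-dimensional left `S`-module (with its underlying `k`-structure). -/
structure FDModule where
  V : Type
  [addCommGroup : AddCommGroup V]
  [modk : Module k V]
  [modS : Module S V]
  [tower : IsScalarTower k S V]
  [scomm : SMulCommClass S k V]
  [fd : FiniteDimensional k V]

attribute [instance] FDModule.addCommGroup FDModule.modk FDModule.modS FDModule.tower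
  FDModule.scomm FDModule.fd

variable (M : Type*) [AddCommGroup M] [Module k M] [Module S M] [IsScalarTower k S M]
  [SMulCommClass S k M]

/-- The twisted trace function `χ_θ ∈ S*`, `χ_θ(s) = trace (θ ∘ ρ(s))`, where `ρ` is the
representation of `S` on `M`. -/
noncomputable def twCharOf (θ : M →ₗ[k] M) : Module.Dual k S :=
  (LinearMap.trace k M).comp
    ((LinearMap.llcomp k M M M θ).comp (Algebra.lsmul k k M).toLinearMap)

variable {k S}

/-- The twisted trace function of a bundled module. -/
noncomputable def twChar (N : FDModule k S) (θ : N.V →ₗ[k] N.V) : Module.Dual k S :=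
  twCharOf k S N.V θ

/-- The natural character `χ_V ∈ S*` of a finite-dimensional module. -/
noncomputable def natChar (N : FDModule k S) : Module.Dual k S :=
  twChar N LinearMap.id

variable (k S)

/-- `C₀(S)`: the span of the natural characters of all finite-dimensional `S`-modules. -/
noncomputable def charSpan : Submodule k (Module.Dual k S) :=
  Submodule.span k (Set.range fun N : FDModule k S => natChar N)

end Paper

namespace Paper
/-- `R` is a symmetric `k`-algebra: it carries a nondegenerate symmetric associative
bilinear form. -/
def IsSymmetricAlgebra (k R : Type*) [Field k] [Ring R] [Algebra k R] : Prop :=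
  ∃ B : R →ₗ[k] R →ₗ[k] k,
    (∀ x y : R, B x y = B y x) ∧ (∀ x : R, (∀ y : R, B x y = 0) → x = 0) ∧
    (∀ x y z : R, B (x * y) z = B x (y * z))
end Paper


open LinearMap in
private lemma aux_pi_semisimple {A : Type} [Ring A] {ι : Type} [Finite ι]
    (M : ι → Type) [∀ i, AddCommGroup (M i)] [∀ i, Module A (M i)]
    [∀ i, IsSemisimpleModule A (M i)] : IsSemisimpleModule A (∀ i, M i) := by
  classical
  cases nonempty_fintype ι
  exact isSemisimpleModule_of_isSemisimpleModule_submodule'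
    (p := fun i => range (LinearMap.single A M i))
    (fun i => .range _)
    (by simp_rw [range_eq_map, Submodule.iSup_map_single, Submodule.pi_top])

private lemma aux_quot_jacobson_semisimple (A : Type) [Ring A] [IsArtinian A A] :
    IsSemisimpleModule A (A ⧸ ((⊥ : Ideal A).jacobson : Submodule A A)) := by
  classical
  obtain ⟨I₀, ⟨t, ht, hI⟩, hmin⟩ := (wellFounded_lt : WellFounded ((· < ·) : Ideal A → Ideal A → Prop)).has_min
    {I : Ideal A | ∃ t : Finset (Ideal A), (∀ m ∈ t, m.IsMaximal) ∧ I = t.inf id}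
    ⟨⊤, ∅, by simp, by simp⟩
  have hJI : (⊥ : Ideal A).jacobson = I₀ := by
    refine le_antisymm ?_ ?_
    · rw [hI]
      exact Finset.le_inf fun m hm => sInf_le ⟨bot_le, ht m hm⟩
    · refine le_sInf fun m hm => ?_
      obtain ⟨-, hmmax⟩ := hm
      have hmem : I₀ ⊓ m ∈
          {I : Ideal A | ∃ t : Finset (Ideal A), (∀ m ∈ t, m.IsMaximal) ∧ I = t.inf id} := by
        refine ⟨insert m t, ?_, ?_⟩
        · intro n hn
          rcases Finset.mem_insert.mp hn with rfl | hn
          · exact hmmax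
          · exact ht n hn
        · rw [Finset.inf_insert, ← hI, inf_comm]
          rfl
      have heq : I₀ ⊓ m = I₀ :=
        ((inf_le_left : I₀ ⊓ m ≤ I₀).lt_or_eq).resolve_left (hmin _ hmem)
      exact (le_of_eq heq.symm).trans inf_le_right
  let f : A →ₗ[A] ∀ i : t, A ⧸ ((i : Ideal A) : Submodule A A) :=
    LinearMap.pi fun i => ((i : Ideal A) : Submodule A A).mkQ
  have hker : LinearMap.ker f = ((⊥ : Ideal A).jacobson : Submodule A A) := by
    rw [LinearMap.ker_pi, hJI, hI]
    simp only [Submodule.ker_mkQ]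
    rw [Finset.inf_eq_iInf, iInf_subtype]
    rfl
  haveI : ∀ i : t, IsSimpleModule A (A ⧸ ((i : Ideal A) : Submodule A A)) := fun i =>
    isSimpleModule_iff_isCoatom.mpr (Ideal.isMaximal_def.mp (ht i i.2))
  haveI : IsSemisimpleModule A (∀ i : t, A ⧸ ((i : Ideal A) : Submodule A A)) :=
    aux_pi_semisimple _
  exact IsSemisimpleModule.congr (M := ↥(LinearMap.range f))
    ((Submodule.quotEquivOfEq _ _ hker.symm) ≪≫ₗ f.quotKerEquivRange)

open Paper in
/-- Lemma 2.3(i): a symmetric factor algebra of a constrained split algebra is semisimple.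
In particular a constrained finite-dimensional split symmetric `k`-algebra is semisimple.
The factor algebra is presented as the image of a surjective algebra map `π : S → R`. -/
theorem statement4 (k S R : Type) [Field k] [Ring S] [Algebra k S] [FiniteDimensional k S]
    [Ring R] [Algebra k R]
    (hsplit : IsSplitAlgebra k S) (hcon : IsConstrained k S)
    (π : S →ₐ[k] R) (hπ : Function.Surjective π)
    (hsym : IsSymmetricAlgebra k R) :
    IsSemisimpleRing R := by
  classical
  obtain ⟨B, hBsymm, hBnd, hBassoc⟩ := hsym
  -- `B 1` vanishes on the span of commutators of `R`
  have h1 : ∀ x ∈ commutatorSpan k R, B 1 x = 0 := by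
    intro x hx
    induction hx using Submodule.span_induction with
    | mem x hx =>
      obtain ⟨a, b, rfl⟩ := hx
      have ha : B 1 (a * b) = B a b := by rw [← hBassoc, one_mul]
      have hb : B 1 (b * a) = B b a := by rw [← hBassoc, one_mul]
      rw [map_sub, ha, hb, hBsymm a b, sub_self]
    | zero => simp
    | add x y _ _ hx hy => rw [map_add, hx, hy, add_zero]
    | smul c x _ hx => rw [map_smul, hx, smul_zero]
  -- `π` maps the commutator span of `S` into that of `R`
  have hcommap : ∀ x ∈ commutatorSpan k S, π x ∈ commutatorSpan k R := by
    intro x hx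
    have hx' : π x ∈ Submodule.map π.toLinearMap (commutatorSpan k S) := ⟨x, hx, rfl⟩
    rw [commutatorSpan, Submodule.map_span] at hx'
    refine Submodule.span_mono ?_ hx'
    rintro _ ⟨y, ⟨a, b, rfl⟩, rfl⟩
    exact ⟨π a, π b, by simp [map_sub, map_mul]⟩
  -- the Jacobson radical of `S` is killed by `π`
  have hJker : ∀ x ∈ (⊥ : Ideal S).jacobson, π x = 0 := by
    intro x hx
    apply hBnd
    intro y
    rw [hBsymm]
    obtain ⟨t, rfl⟩ := hπ y
    have hmul : t * x ∈ (⊥ : Ideal S).jacobson := Ideal.mul_mem_left _ t hx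
    calc B (π t) (π x) = B 1 (π t * π x) := by rw [← hBassoc, one_mul]
      _ = B 1 (π (t * x)) := by rw [← map_mul π t x]
      _ = 0 := h1 _ (hcommap _ (hcon hmul))
  -- transfer semisimplicity along `π`
  letI : Module S R := Module.compHom R π.toRingHom
  haveI : RingHomSurjective π.toRingHom := ⟨hπ⟩
  let pl : S →ₗ[S] R :=
    { toFun := π
      map_add' := fun a b => map_add π a b
      map_smul' := fun s x => map_mul π s x }
  have hkerpl : ((⊥ : Ideal S).jacobson : Submodule S S) ≤ LinearMap.ker pl := by
    intro x hx
    exact LinearMap.mem_ker.mpr (hJker x hx)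
  haveI : IsArtinian S S :=
    isArtinian_of_tower k (inferInstance : IsArtinian k S)
  haveI hss : IsSemisimpleModule S (S ⧸ ((⊥ : Ideal S).jacobson : Submodule S S)) :=
    aux_quot_jacobson_semisimple S
  have e2 := Submodule.quotientQuotientEquivQuotient
    ((⊥ : Ideal S).jacobson : Submodule S S) (LinearMap.ker pl) hkerpl
  haveI h2 : IsSemisimpleModule S (S ⧸ LinearMap.ker pl) :=
    IsSemisimpleModule.congr e2.symm
  haveI h3 : IsSemisimpleModule S R :=
    IsSemisimpleModule.congr (LinearMap.quotKerEquivOfSurjective pl hπ).symm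
  let l : R →ₛₗ[π.toRingHom] R :=
    { toFun := id
      map_add' := fun _ _ => rfl
      map_smul' := fun _ _ => rfl }
  exact (l.isSemisimpleModule_iff_of_bijective Function.bijective_id).mp h3
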